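/- Let (a₁,…,a_r, a, 1^b) and (a₁,…,a_r, a+1, 1^{b-1}) be two partitions of n in type A (a₁ ≥ … ≥ a_r ≥ a+1), and let (f₁,H₁), (f₂,H₂) be the nilpotent elements and diagonal semisimple elements in sl_n determined by the pyramids P₁, P₂ described by: left-aligned rows a₁,…,a_r with a half-box shift to the hook part; P₁ has left-aligned hook (a,1^b); P₂ is obtained from P₁ by shifting the hook part half a box right and moving the column (1^b) one box left and one box down. Then the pairs (f₁,H₁), (f₂,H₂) satisfy the conditions (★): g^{(1)}_{≥2} ⊆ g^{(2)}_{≥1} ⊆ g^{(1)}_{≥0}, g^{(1)}_1 ⊆ ⊕_{δ=0}^{2} g_{1,δ}, g^{(2)}_1 ⊆ ⊕_{δ=0}^{2} g_{δ,1}, and f₀ = f₂ - f₁ ∈ g_{0,-2}. -/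

import Mathlib

open Matrix

namespace Statement18

attribute [local instance] LieRing.ofAssociativeRing

/-- The set of boxes of the pyramids: the rows `a₁, …, a_r`, the hook row of length `a`,
and the column `1^b`. -/
abbrev Box (r a b : ℕ) (A : Fin r → ℕ) : Type :=
  ((Σ i : Fin r, Fin (A i)) ⊕ (Fin a ⊕ Fin b))

variable (r a b : ℕ) (A : Fin r → ℕ)

/-- Abscissae of the box centers in the pyramid `P₁` (box width = 2 units): rows
`a₁, …, a_r` left-aligned (centers `2c+1`), the hook part shifted by half a box
(hook row centers `2t+2`, column centers `2`). -/
def x1 : Box r a b A → ℤ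
  | Sum.inl ⟨_, c⟩ => 2 * (c : ℤ) + 1
  | Sum.inr (Sum.inl t) => 2 * (t : ℤ) + 2
  | Sum.inr (Sum.inr _) => 2

/-- Abscissae in the pyramid `P₂`: the hook row is shifted half a box to the right
(centers `2t+3`) and the column `1^b` is moved one box to the left and one box down
(centers `1`). -/
def x2 : Box r a b A → ℤ
  | Sum.inl ⟨_, c⟩ => 2 * (c : ℤ) + 1
  | Sum.inr (Sum.inl t) => 2 * (t : ℤ) + 3
  | Sum.inr (Sum.inr _) => 1

/-- Row indices in `P₁`: the column boxes sit in their own rows above the hook row. -/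
def row1 : Box r a b A → ℕ
  | Sum.inl ⟨i, _⟩ => i
  | Sum.inr (Sum.inl _) => r
  | Sum.inr (Sum.inr s) => r + 1 + s

/-- Row indices in `P₂`: the bottom column box has moved down into the hook row. -/
def row2 : Box r a b A → ℕ
  | Sum.inl ⟨i, _⟩ => i
  | Sum.inr (Sum.inl _) => r
  | Sum.inr (Sum.inr s) => if (s : ℕ) = 0 then r else r + s

/-- The nilpotent element determined by a pyramid: the sum of the elementary matrices
`E_{j,k}` over pairs of horizontally adjacent boxes in the same row with
`x_j - x_k = -2`. -/
noncomputable def fmat (x : Box r a b A → ℤ) (row : Box r a b A → ℕ) :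
    Matrix (Box r a b A) (Box r a b A) ℂ :=
  ∑ j : Box r a b A, ∑ k : Box r a b A,
    if row j = row k ∧ x j + 2 = x k then Matrix.single j k 1 else 0

/-- The diagonal, traceless semisimple element determined by a pyramid; it satisfies
`[H, E_{j,k}] = (x_j - x_k) E_{j,k}`. -/
noncomputable def Hmat (x : Box r a b A → ℤ) :
    Matrix (Box r a b A) (Box r a b A) ℂ :=
  Matrix.diagonal (fun j => (x j : ℂ))
    - (((∑ j : Box r a b A, (x j : ℂ)) / (Fintype.card (Box r a b A) : ℂ)) •
        (1 : Matrix (Box r a b A) (Box r a b A) ℂ))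

/-- The `ad(H)`-eigenspace with eigenvalue `δ`. -/
noncomputable def E (x : Box r a b A → ℤ) (δ : ℤ) :
    Submodule ℂ (Matrix (Box r a b A) (Box r a b A) ℂ) :=
  Module.End.eigenspace
    (LieAlgebra.ad ℂ (Matrix (Box r a b A) (Box r a b A) ℂ) (Hmat r a b A x)) (δ : ℂ)

lemma ad_apply (x : Box r a b A → ℤ) (M : Matrix (Box r a b A) (Box r a b A) ℂ)
    (j k : Box r a b A) :
    (LieAlgebra.ad ℂ (Matrix (Box r a b A) (Box r a b A) ℂ) (Hmat r a b A x)) M j k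
      = (((x j - x k : ℤ)) : ℂ) * M j k := by
  simp only [LieAlgebra.ad_apply, Ring.lie_def, Hmat, Matrix.sub_mul, Matrix.mul_sub,
    Matrix.sub_apply, Matrix.smul_mul, Matrix.mul_smul, Matrix.one_mul, Matrix.mul_one,
    Matrix.diagonal_mul, Matrix.mul_diagonal, Matrix.smul_apply, smul_eq_mul]
  push_cast
  ring

lemma mem_E_iff (x : Box r a b A → ℤ) (δ : ℤ)
    (M : Matrix (Box r a b A) (Box r a b A) ℂ) :
    M ∈ E r a b A x δ ↔ ∀ j k : Box r a b A, M j k ≠ 0 → x j - x k = δ := by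
  rw [E, Module.End.mem_eigenspace_iff]
  constructor
  · intro h j k hjk
    have h2 := congrFun (congrFun h j) k
    rw [ad_apply] at h2
    rw [Matrix.smul_apply, smul_eq_mul] at h2
    have h3 : ((x j - x k : ℤ) : ℂ) = (δ : ℂ) := mul_right_cancel₀ hjk h2
    exact_mod_cast h3
  · intro h
    ext j k
    rw [ad_apply, Matrix.smul_apply, smul_eq_mul]
    by_cases hm : M j k = 0
    · simp [hm]
    · rw [h j k hm]

lemma fmat_apply (x : Box r a b A → ℤ) (row : Box r a b A → ℕ) (j k : Box r a b A) :
    fmat r a b A x row j k = if row j = row k ∧ x j + 2 = x k then 1 else 0 := by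
  unfold fmat
  rw [Matrix.sum_apply]
  rw [Finset.sum_eq_single j]
  · rw [Matrix.sum_apply]
    rw [Finset.sum_eq_single k]
    · split_ifs with h
      · simp [Matrix.single]
      · simp
    · intro k' _ hk'
      split_ifs with h
      · simp [Matrix.single]; exact fun h => absurd h hk'
      · simp
    · simp
  · intro j' _ hj'
    rw [Matrix.sum_apply]
    apply Finset.sum_eq_zero
    intro k' _
    split_ifs with h
    · simp [Matrix.single]; exact fun h _ => absurd h hj'
    · simp
  · simp

lemma decomp (x : Box r a b A → ℤ) (M : Matrix (Box r a b A) (Box r a b A) ℂ) :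
    M = ∑ δ ∈ Finset.image (fun p : Box r a b A × Box r a b A => x p.1 - x p.2)
          Finset.univ,
        Matrix.of (fun j k => if x j - x k = δ then M j k else 0) := by
  ext j k
  rw [Matrix.sum_apply]
  simp only [Matrix.of_apply]
  rw [Finset.sum_ite_eq]
  simp only [Finset.mem_image]
  rw [if_pos ⟨(j, k), Finset.mem_univ _, rfl⟩]

lemma eig_le_iSup (x y : Box r a b A → ℤ) (d c : ℤ)
    (h : ∀ j k : Box r a b A, x j - x k = d → c ≤ y j - y k) :
    E r a b A x d ≤ ⨆ e : ℤ, ⨆ _ : c ≤ e, E r a b A y e := by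
  intro M hM
  rw [mem_E_iff] at hM
  rw [decomp r a b A y M]
  refine Submodule.sum_mem _ fun δ _ => ?_
  by_cases hc : c ≤ δ
  · refine Submodule.mem_iSup_of_mem δ (Submodule.mem_iSup_of_mem hc ?_)
    rw [mem_E_iff]
    intro j k hjk
    simp only [Matrix.of_apply] at hjk
    by_contra hne
    exact hjk (if_neg hne)
  · have hz : (Matrix.of fun j k =>
        if y j - y k = δ then M j k else 0) = (0 : Matrix (Box r a b A) (Box r a b A) ℂ) := by
      ext j k
      simp only [Matrix.of_apply, Matrix.zero_apply]
      split_ifs with h1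
      · by_contra hm
        exact hc (h1 ▸ h j k (hM j k hm))
      · rfl
    rw [hz]
    exact Submodule.zero_mem _

lemma eig_le_three (x y : Box r a b A → ℤ)
    (h : ∀ j k : Box r a b A, x j - x k = 1 →
      y j - y k = 0 ∨ y j - y k = 1 ∨ y j - y k = 2) :
    E r a b A x 1 ≤ (E r a b A x 1 ⊓ E r a b A y 0) ⊔ (E r a b A x 1 ⊓ E r a b A y 1)
      ⊔ (E r a b A x 1 ⊓ E r a b A y 2) := by
  intro M hM
  rw [mem_E_iff] at hM
  set m : ℤ → Matrix (Box r a b A) (Box r a b A) ℂ :=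
    fun δ => Matrix.of fun j k => if y j - y k = δ then M j k else 0 with hm
  have hmem : ∀ δ : ℤ, m δ ∈ E r a b A x 1 ⊓ E r a b A y δ := by
    intro δ
    rw [Submodule.mem_inf]
    constructor
    · rw [mem_E_iff]
      intro j k hjk
      simp only [hm, Matrix.of_apply] at hjk
      split_ifs at hjk with h1
      · exact hM j k hjk
      · exact absurd rfl hjk
    · rw [mem_E_iff]
      intro j k hjk
      simp only [hm, Matrix.of_apply] at hjk
      split_ifs at hjk with h1
      · exact h1
      · exact absurd rfl hjk
  have hsum : M = m 0 + m 1 + m 2 := by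
    ext j k
    simp only [hm, Matrix.add_apply, Matrix.of_apply]
    by_cases h0 : M j k = 0
    · simp [h0]
    · rcases h j k (hM j k h0) with h1 | h1 | h1 <;> rw [h1] <;> norm_num
  rw [hsum]
  exact Submodule.add_mem _ (Submodule.add_mem _
    (Submodule.mem_sup_left (Submodule.mem_sup_left (hmem 0)))
    (Submodule.mem_sup_left (Submodule.mem_sup_right (hmem 1))))
    (Submodule.mem_sup_right (hmem 2))

lemma comb1 (j k : Box r a b A) (h : 2 ≤ x1 r a b A j - x1 r a b A k) :
    1 ≤ x2 r a b A j - x2 r a b A k := by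
  rcases j with ⟨i, c⟩ | t | s <;> rcases k with ⟨i', c'⟩ | t' | s' <;>
    simp only [x1, x2] at * <;> omega

lemma comb2 (j k : Box r a b A) (h : 1 ≤ x2 r a b A j - x2 r a b A k) :
    0 ≤ x1 r a b A j - x1 r a b A k := by
  rcases j with ⟨i, c⟩ | t | s <;> rcases k with ⟨i', c'⟩ | t' | s' <;>
    simp only [x1, x2] at * <;> omega

lemma comb3 (j k : Box r a b A) (h : x1 r a b A j - x1 r a b A k = 1) :
    x2 r a b A j - x2 r a b A k = 0 ∨ x2 r a b A j - x2 r a b A k = 1 ∨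
      x2 r a b A j - x2 r a b A k = 2 := by
  rcases j with ⟨i, c⟩ | t | s <;> rcases k with ⟨i', c'⟩ | t' | s' <;>
    simp only [x1, x2] at * <;> omega

lemma comb4 (j k : Box r a b A) (h : x2 r a b A j - x2 r a b A k = 1) :
    x1 r a b A j - x1 r a b A k = 0 ∨ x1 r a b A j - x1 r a b A k = 1 ∨
      x1 r a b A j - x1 r a b A k = 2 := by
  rcases j with ⟨i, c⟩ | t | s <;> rcases k with ⟨i', c'⟩ | t' | s' <;>
    simp only [x1, x2] at * <;> omega

lemma dirA (j k : Box r a b A)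
    (h : row1 r a b A j = row1 r a b A k ∧ x1 r a b A j + 2 = x1 r a b A k) :
    row2 r a b A j = row2 r a b A k ∧ x2 r a b A j + 2 = x2 r a b A k := by
  obtain ⟨h1, h2⟩ := h
  rcases j with ⟨i, c⟩ | t | s <;> rcases k with ⟨i', c'⟩ | t' | s' <;>
    simp only [x1, x2, row1, row2, true_and, and_true] at * <;> (try split_ifs) <;> omega

lemma dirB (j k : Box r a b A)
    (h : row2 r a b A j = row2 r a b A k ∧ x2 r a b A j + 2 = x2 r a b A k) :
    (row1 r a b A j = row1 r a b A k ∧ x1 r a b A j + 2 = x1 r a b A k) ∨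
      (x1 r a b A j - x1 r a b A k = 0 ∧ x2 r a b A j - x2 r a b A k = -2) := by
  obtain ⟨h1, h2⟩ := h
  rcases j with ⟨i, c⟩ | t | s <;> rcases k with ⟨i', c'⟩ | t' | s' <;>
    simp only [x1, x2, row1, row2, true_and, and_true] at * <;> (try split_ifs at h1) <;> omega

lemma fpart :
    fmat r a b A (x2 r a b A) (row2 r a b A) - fmat r a b A (x1 r a b A) (row1 r a b A)
      ∈ E r a b A (x1 r a b A) 0 ⊓ E r a b A (x2 r a b A) (-2) := by
  have key : ∀ j k : Box r a b A,
      (fmat r a b A (x2 r a b A) (row2 r a b A)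
        - fmat r a b A (x1 r a b A) (row1 r a b A)) j k ≠ 0 →
      x1 r a b A j - x1 r a b A k = 0 ∧ x2 r a b A j - x2 r a b A k = -2 := by
    intro j k hjk
    rw [Matrix.sub_apply, fmat_apply, fmat_apply] at hjk
    by_cases hc1 : row1 r a b A j = row1 r a b A k ∧ x1 r a b A j + 2 = x1 r a b A k
    · rw [if_pos (dirA r a b A j k hc1), if_pos hc1, sub_self] at hjk
      exact absurd rfl hjk
    · by_cases hc2 : row2 r a b A j = row2 r a b A k ∧ x2 r a b A j + 2 = x2 r a b A k
      · rcases dirB r a b A j k hc2 with h | h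
        · exact absurd h hc1
        · exact h
      · rw [if_neg hc2, if_neg hc1, sub_self] at hjk
        exact absurd rfl hjk
  exact Submodule.mem_inf.mpr
    ⟨(mem_E_iff r a b A _ _ _).mpr fun j k hjk => (key j k hjk).1,
     (mem_E_iff r a b A _ _ _).mpr fun j k hjk => (key j k hjk).2⟩

/-- Let `(a₁, …, a_r, a, 1^b)` and `(a₁, …, a_r, a+1, 1^{b-1})` be
two partitions of `n` (`a₁ ≥ … ≥ a_r ≥ a+1`, `a, b ≥ 1`), and let `(f₁, H₁)`,
`(f₂, H₂)` be the nilpotent and diagonal semisimple elements of `sl_n` determined by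
the pyramids `P₁`, `P₂` described above.  Then the pairs `(f₁, H₁)`, `(f₂, H₂)` satisfy
the conditions (★): `g^{(1)}_{≥2} ⊆ g^{(2)}_{≥1} ⊆ g^{(1)}_{≥0}`,
`g^{(1)}₁ ⊆ ⊕_{δ=0}^{2} g_{1,δ}`, `g^{(2)}₁ ⊆ ⊕_{δ=0}^{2} g_{δ,1}`, and
`f₀ = f₂ - f₁ ∈ g_{0,-2}`, where `g^{(i)}_δ` is the `ad(H_i)`-eigenspace with
eigenvalue `δ` and `g_{δ₁,δ₂} = g^{(1)}_{δ₁} ∩ g^{(2)}_{δ₂}`. -/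
theorem statement18
    (ha : 1 ≤ a) (hb : 1 ≤ b)
    (hA_mono : ∀ i j : Fin r, i ≤ j → A j ≤ A i)
    (hA_ge : ∀ i : Fin r, a + 1 ≤ A i) :
    let gl := Matrix (Box r a b A) (Box r a b A) ℂ
    let f1m : gl := fmat r a b A (x1 r a b A) (row1 r a b A)
    let f2m : gl := fmat r a b A (x2 r a b A) (row2 r a b A)
    let H1m : gl := Hmat r a b A (x1 r a b A)
    let H2m : gl := Hmat r a b A (x2 r a b A)
    let eig1 : ℤ → Submodule ℂ gl := fun δ =>
      Module.End.eigenspace (LieAlgebra.ad ℂ gl H1m) (δ : ℂ)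
    let eig2 : ℤ → Submodule ℂ gl := fun δ =>
      Module.End.eigenspace (LieAlgebra.ad ℂ gl H2m) (δ : ℂ)
    ((⨆ d : ℤ, ⨆ _ : (2 : ℤ) ≤ d, eig1 d) ≤ ⨆ d : ℤ, ⨆ _ : (1 : ℤ) ≤ d, eig2 d) ∧
    ((⨆ d : ℤ, ⨆ _ : (1 : ℤ) ≤ d, eig2 d) ≤ ⨆ d : ℤ, ⨆ _ : (0 : ℤ) ≤ d, eig1 d) ∧
    (eig1 1 ≤ (eig1 1 ⊓ eig2 0) ⊔ (eig1 1 ⊓ eig2 1) ⊔ (eig1 1 ⊓ eig2 2)) ∧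
    (eig2 1 ≤ (eig2 1 ⊓ eig1 0) ⊔ (eig2 1 ⊓ eig1 1) ⊔ (eig2 1 ⊓ eig1 2)) ∧
    (f2m - f1m ∈ eig1 0 ⊓ eig2 (-2)) := by
  intro gl f1m f2m H1m H2m eig1 eig2
  refine ⟨?_, ?_, ?_, ?_, ?_⟩
  · refine iSup_le fun d => iSup_le fun hd => ?_
    exact eig_le_iSup r a b A (x1 r a b A) (x2 r a b A) d 1
      (fun j k h => comb1 r a b A j k (by rw [h]; exact hd))
  · refine iSup_le fun d => iSup_le fun hd => ?_
    exact eig_le_iSup r a b A (x2 r a b A) (x1 r a b A) d 0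
      (fun j k h => comb2 r a b A j k (by rw [h]; exact hd))
  · exact eig_le_three r a b A (x1 r a b A) (x2 r a b A) (comb3 r a b A)
  · exact eig_le_three r a b A (x2 r a b A) (x1 r a b A) (comb4 r a b A)
  · exact fpart r a b A


end Statement18
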